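/- arXiv:2201.03631 — 2 statements merged into one kernel-verified Lean document; each statement's English description precedes it below -/
import Mathlib

section
/- For any small set A, any infinite A-indiscernible sequences I, J, and any infinite order types O and O': I ≈_A J if and only if there are sequences K₀, L₀, K₁, …, L_{n−1}, K_n such that K₀ = I and K_n = J; for 0 < i < n, K_i has order type O; for i < n, L_i has order type O'; and for each i < n, both K_i + L_i and K_{i+1} + L_i are A-indiscernible. -/
open FirstOrder Cardinal

universe u v w

namespace BddUltra

variable (L : FirstOrder.Language.{u, u}) (M : Type u) [L.Structure M]

/-- The automorphism group of `M` (composition as multiplication). -/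
instance : Group (M ≃[L] M) where
  mul f g := f.comp g
  one := Language.Equiv.refl L M
  inv := Language.Equiv.symm
  mul_assoc f g h := by ext x; rfl
  one_mul f := by ext x; rfl
  mul_one f := by ext x; rfl
  inv_mul_cancel f := by ext x; exact f.toEquiv.symm_apply_apply x

/-- The cardinality `|T|` of the theory: the cardinality of the language plus `ℵ₀`. -/
def cardT : Cardinal.{u} := L.card + ℵ₀

/-- Two tuples realize the same complete type over `∅`. -/
def SameType {α : Type v} (a b : α → M) : Prop :=
  ∀ φ : L.Formula α, φ.Realize a ↔ φ.Realize b

/-- Two tuples realize the same complete type over the set `A ⊆ M` of parameters. -/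
def SameTypeOver (A : Set M) {α : Type v} (a b : α → M) : Prop :=
  ∀ φ : L.Formula (↥A ⊕ α),
    φ.Realize (Sum.elim (Subtype.val : ↥A → M) a) ↔
      φ.Realize (Sum.elim (Subtype.val : ↥A → M) b)

theorem SameType.comp {α : Type v} {γ : Type w} {a b : α → M} (h : SameType L M a b)
    (g : γ → α) : SameType L M (a ∘ g) (b ∘ g) := by
  intro φ
  have := h (φ.relabel g)
  rwa [Language.Formula.realize_relabel, Language.Formula.realize_relabel] at this

/-- An invariant equivalence relation of arity `α` on `α`-tuples from `M`. -/
structure IER (α : Type u) : Type u where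
  rel : (α → M) → (α → M) → Prop
  equiv : Equivalence rel
  invariant : ∀ a b c d : α → M,
    SameType L M (Sum.elim a b) (Sum.elim c d) → (rel a b ↔ rel c d)

def IER.setoid {α : Type u} (E : IER L M α) : Setoid (α → M) := ⟨E.rel, E.equiv⟩

/-- The pair (juxtaposition) of two invariant equivalence relations. -/
def IER.prod {α β : Type u} (E : IER L M α) (F : IER L M β) : IER L M (α ⊕ β) where
  rel x y := E.rel (x ∘ Sum.inl) (y ∘ Sum.inl) ∧ F.rel (x ∘ Sum.inr) (y ∘ Sum.inr)
  equiv := ⟨fun _ => ⟨E.equiv.refl _, F.equiv.refl _⟩,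
    fun h => ⟨E.equiv.symm h.1, F.equiv.symm h.2⟩,
    fun h h' => ⟨E.equiv.trans h.1 h'.1, F.equiv.trans h.2 h'.2⟩⟩
  invariant := by
    intro a b c d h
    have e1 : ∀ (x : α ⊕ β → M) (y : α ⊕ β → M),
        (Sum.elim x y) ∘ (Sum.map Sum.inl Sum.inl : α ⊕ α → (α ⊕ β) ⊕ (α ⊕ β))
          = Sum.elim (x ∘ Sum.inl) (y ∘ Sum.inl) := by
      intro x y; funext i; cases i <;> rfl
    have e2 : ∀ (x : α ⊕ β → M) (y : α ⊕ β → M),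
        (Sum.elim x y) ∘ (Sum.map Sum.inr Sum.inr : β ⊕ β → (α ⊕ β) ⊕ (α ⊕ β))
          = Sum.elim (x ∘ Sum.inr) (y ∘ Sum.inr) := by
      intro x y; funext i; cases i <;> rfl
    have h1 := h.comp (L := L) (M := M) (Sum.map Sum.inl Sum.inl)
    have h2 := h.comp (L := L) (M := M) (Sum.map Sum.inr Sum.inr)
    rw [e1, e1] at h1
    rw [e2, e2] at h2
    exact and_congr (E.invariant _ _ _ _ h1) (F.invariant _ _ _ _ h2)

/-- The set of automorphisms fixing the ultraimaginary `a_E`. -/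
def autU {α : Type u} (E : IER L M α) (a : α → M) : Set (M ≃[L] M) :=
  {σ | E.rel a (⇑σ ∘ a)}

/-- The set of automorphisms fixing the set `A` pointwise. -/
def autSet (A : Set M) : Set (M ≃[L] M) := {σ | ∀ x ∈ A, σ x = x}

/-- The set of automorphisms fixing the set `A` and the tuple `u` pointwise. -/
def autSetTup (A : Set M) {γ : Type v} (u : γ → M) : Set (M ≃[L] M) :=
  {σ | (∀ x ∈ A, σ x = x) ∧ ∀ i, σ (u i) = u i}

/-- The ultraimaginary `b_F` is bounded over a parameter set whose pointwise
stabilizer is `X`: the `X`-orbit of `b` meets fewer than `κ` classes of `F`. -/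
def BddU (κ : Cardinal.{u}) (X : Set (M ≃[L] M)) {β : Type u} (F : IER L M β)
    (b : β → M) : Prop :=
  ∃ S : Set (β → M), #S < κ ∧ ∀ σ ∈ X, ∃ s ∈ S, F.rel (⇑σ ∘ b) s

/-- The cardinality of the orbit of the ultraimaginary `b_F` under the set `X`
of automorphisms. -/
def orbitCard (X : Set (M ≃[L] M)) {β : Type u} (F : IER L M β) (b : β → M) :
    Cardinal.{u} :=
  #(Set.range fun σ : X => Quotient.mk F.setoid (⇑σ.1 ∘ b))

/-- `b ⫝ᵇᵘ_A c`, expressed in terms of the pointwise stabilizers `XA`, `XAb`, `XAc` of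
`A`, `Ab` and `Ac`: an ultraimaginary is bounded over `Ab` and over `Ac` iff it is
bounded over `A`. -/
def IndepBU (κ : Cardinal.{u}) (XA XAb XAc : Set (M ≃[L] M)) : Prop :=
  ∀ (δ : Type u) (H : IER L M δ) (d : δ → M),
    (BddU L M κ XAb H d ∧ BddU L M κ XAc H d) ↔ BddU L M κ XA H d

/-- The set of automorphisms fixing an elementary substructure pointwise. -/
def autES (N : L.ElementarySubstructure M) : Set (M ≃[L] M) :=
  autSet L M (N : Set M)

/-- `Autf(𝕄/x)` where `X = Aut(𝕄/x)`: the subgroup generated by all pointwise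
stabilizers of small models that are contained in `X`. -/
def autfGen (κ : Cardinal.{u}) (X : Set (M ≃[L] M)) : Subgroup (M ≃[L] M) :=
  Subgroup.closure {σ | ∃ N : L.ElementarySubstructure M,
    #(N : Set M) < κ ∧ autES L M N ⊆ X ∧ σ ∈ autES L M N}

/-- The group of Lascar strong automorphisms over the set `A ⊆ M`: generated by the
pointwise stabilizers of small models containing `A`. -/
def lascarGrp (κ : Cardinal.{u}) (A : Set M) : Subgroup (M ≃[L] M) :=
  Subgroup.closure {σ | ∃ N : L.ElementarySubstructure M,
    #(N : Set M) < κ ∧ A ⊆ (N : Set M) ∧ σ ∈ autES L M N}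

/-- κ-saturation: every finitely realizable set of formulas over a parameter tuple of
arity `< κ`, in `< κ` many variables, is realized. -/
def Saturated (κ : Cardinal.{u}) : Prop :=
  ∀ (α β : Type u), #α < κ → #β < κ → ∀ (a : α → M) (p : Set (L.Formula (α ⊕ β))),
    (∀ s : Finset (L.Formula (α ⊕ β)), ↑s ⊆ p →
      ∃ b : β → M, ∀ φ ∈ s, φ.Realize (Sum.elim a b)) →
    ∃ b : β → M, ∀ φ ∈ p, φ.Realize (Sum.elim a b)

/-- Strong κ-homogeneity: tuples of arity `< κ` with the same type over `∅` are
conjugate under an automorphism. -/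
def Homog (κ : Cardinal.{u}) : Prop :=
  ∀ (α : Type u) (a b : α → M), #α < κ → SameType L M a b →
    ∃ σ : M ≃[L] M, ∀ i, σ (a i) = b i

/-- `M` is a monster model with bound `κbar`: `κbar` is a sufficiently large
(uncountable, regular, strong limit, above `|T|`) cardinal, and `M` is
`κbar`-saturated and strongly `κbar`-homogeneous. -/
structure Monster (κbar : Cardinal.{u}) : Prop where
  aleph0_lt : ℵ₀ < κbar
  isRegular : κbar.IsRegular
  strongLimit : ∀ ρ : Cardinal.{u}, ρ < κbar → 2 ^ ρ < κbar
  lang_lt : L.card < κbar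
  saturated : Saturated L M κbar
  homog : Homog L M κbar

/-- A hyperimaginary: the class of a countable tuple under a countably
type-definable (over `∅`) equivalence relation. -/
structure Hyp : Type u where
  rep : ℕ → M
  fmls : Set (L.Formula (ℕ ⊕ ℕ))
  countable : fmls.Countable
  equiv : Equivalence fun a b : ℕ → M => ∀ φ ∈ fmls, φ.Realize (Sum.elim a b)

/-- The automorphisms fixing each hyperimaginary in the set `A`. -/
def autHyp (A : Set (Hyp L M)) : Set (M ≃[L] M) :=
  {σ | ∀ h ∈ A, ∀ φ ∈ h.fmls, φ.Realize (Sum.elim h.rep (⇑σ ∘ h.rep))}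

/-- The automorphisms fixing each hyperimaginary in `A` and the tuple `u` pointwise. -/
def autHypTup (A : Set (Hyp L M)) {γ : Type v} (u : γ → M) : Set (M ≃[L] M) :=
  {σ | σ ∈ autHyp L M A ∧ ∀ i, σ (u i) = u i}

/-- Flattening of a finite subsequence of a sequence of tuples into a single tuple. -/
def flatten {ι : Type v} {β : Type w} (f : ι → β → M) {n : ℕ} (s : Fin n → ι) :
    Fin n × β → M := fun p => f (s p.1) p.2

/-- A sequence of tuples is `A`-indiscernible (`A ⊆ M` a set of real parameters). -/
def IndiscOver (A : Set M) {ι : Type v} [Preorder ι] {β : Type w} (f : ι → β → M) : Prop :=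
  ∀ (n : ℕ) (s t : Fin n → ι), StrictMono s → StrictMono t →
    SameTypeOver L M A (flatten M f s) (flatten M f t)

/-- Two sequences have the same Ehrenfeucht–Mostowski type over `A ⊆ M`. -/
def SameEMOver (A : Set M) {ι : Type v} [Preorder ι] {ι' : Type w} [Preorder ι']
    {β : Type u} (f : ι → β → M) (g : ι' → β → M) : Prop :=
  ∀ (n : ℕ) (s : Fin n → ι) (t : Fin n → ι'), StrictMono s → StrictMono t →
    SameTypeOver L M A (flatten M f s) (flatten M g t)

/-- A sequence of tuples is `A`-indiscernible, for `A` a set of hyperimaginaries: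
any two increasing tuples from the sequence are conjugate under `Aut(𝕄/A)`. -/
def IndiscOverHyp (A : Set (Hyp L M)) {ι : Type v} [Preorder ι] {β : Type w}
    (f : ι → β → M) : Prop :=
  ∀ (n : ℕ) (s t : Fin n → ι), StrictMono s → StrictMono t →
    ∃ σ ∈ autHyp L M A, ∀ (i : Fin n) (x : β), σ (f (s i) x) = f (t i) x

/-- Two sequences have the same EM-type over the set `A` of hyperimaginaries. -/
def SameEMOverHyp (A : Set (Hyp L M)) {ι : Type v} [Preorder ι] {ι' : Type w} [Preorder ι']
    {β : Type u} (f : ι → β → M) (g : ι' → β → M) : Prop :=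
  ∀ (n : ℕ) (s : Fin n → ι) (t : Fin n → ι'), StrictMono s → StrictMono t →
    ∃ σ ∈ autHyp L M A, ∀ (i : Fin n) (x : β), σ (f (s i) x) = g (t i) x

/-- A sequence of `β`-tuples from `N`, indexed by an arbitrary small linear order. -/
structure Seq (N : Type u) (β : Type u) : Type (u + 1) where
  idx : Type u
  [ord : LinearOrder idx]
  val : idx → β → N

attribute [instance] Seq.ord

/-- Concatenation `I + J` of sequences. -/
def Seq.concat {N β : Type u} (I J : Seq N β) : Seq N β where
  idx := I.idx ⊕ₗ J.idx
  val := fun x => Sum.elim I.val J.val (ofLex x)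

/-- The sequence `I` flattened into a single tuple. -/
def Seq.flat {N β : Type u} (I : Seq N β) : I.idx × β → N := fun p => I.val p.1 p.2

/-- The image `σ · I` of a sequence under an automorphism. -/
def Seq.map {β : Type u} (σ : M ≃[L] M) (I : Seq M β) : Seq M β where
  idx := I.idx
  ord := I.ord
  val := fun i x => σ (I.val i x)

/-- The sequence `(b_i)_{i < ω}` packaged as a `Seq`. -/
def Seq.ofNat {N β : Type u} (b : ℕ → β → N) : Seq N β where
  idx := ULift.{u} ℕ
  val := fun n => b n.down

/-- `I ∼_A J`: both sequences are infinite and `I + J` or `J + I` is `A`-indiscernible. -/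
def SimSeq (A : Set M) {β : Type u} (I J : Seq M β) : Prop :=
  Infinite I.idx ∧ Infinite J.idx ∧
    (IndiscOver L M A (I.concat J).val ∨ IndiscOver L M A (J.concat I).val)

/-- `I ≈_A J`: the transitive closure of `∼_A`. -/
def ApproxSeq (A : Set M) {β : Type u} : Seq M β → Seq M β → Prop :=
  Relation.TransGen (SimSeq L M A)

/-- `I ∼_A J` for `A` a set of hyperimaginaries. -/
def SimSeqHyp (A : Set (Hyp L M)) {β : Type u} (I J : Seq M β) : Prop :=
  Infinite I.idx ∧ Infinite J.idx ∧
    (IndiscOverHyp L M A (I.concat J).val ∨ IndiscOverHyp L M A (J.concat I).val)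

/-- `I ≈_A J` for `A` a set of hyperimaginaries. -/
def ApproxSeqHyp (A : Set (Hyp L M)) {β : Type u} : Seq M β → Seq M β → Prop :=
  Relation.TransGen (SimSeqHyp L M A)

/-- `u ⫝ᵇᵘ_A v` for tuples `u`, `v` over a set `A ⊆ M` of real parameters. -/
def IndepBUReal (κ : Cardinal.{u}) (A : Set M) {γ : Type v} {δ : Type w}
    (x : γ → M) (y : δ → M) : Prop :=
  IndepBU L M κ (autSet L M A) (autSetTup L M A x) (autSetTup L M A y)

/-- `u ⫝ᵇᵘ_A v` for tuples `u`, `v` over a set `A` of hyperimaginaries. -/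
def IndepBUHyp (κ : Cardinal.{u}) (A : Set (Hyp L M)) {γ : Type v} {δ : Type w}
    (x : γ → M) (y : δ → M) : Prop :=
  IndepBU L M κ (autHyp L M A) (autHypTup L M A x) (autHypTup L M A y)

/-- A total `⫝ᵇᵘ`-Morley sequence over the set `A ⊆ M`. -/
def TotalMorleyReal (κ : Cardinal.{u}) (A : Set M) {β : Type u} (b : ℕ → β → M) : Prop :=
  IndiscOver L M A b ∧
    ∀ I J : Seq M β, #I.idx < κ → #J.idx < κ →
      SameEMOver L M A ((I.concat J).val) b →
        IndepBUReal L M κ A I.flat J.flat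

/-- A total `⫝ᵇᵘ`-Morley sequence over the set `A` of hyperimaginaries. -/
def TotalMorleyHyp (κ : Cardinal.{u}) (A : Set (Hyp L M)) {β : Type u}
    (b : ℕ → β → M) : Prop :=
  IndiscOverHyp L M A b ∧
    ∀ I J : Seq M β, #I.idx < κ → #J.idx < κ →
      SameEMOverHyp L M A ((I.concat J).val) b →
        IndepBUHyp L M κ A I.flat J.flat

/-- `tp(b/Ac)` divides over `A`. -/
def Divides (A : Set M) {β : Type v} {γ : Type w} (b : β → M) (c : γ → M) : Prop :=
  ∃ ci : ℕ → γ → M, ci 0 = c ∧ IndiscOver L M A ci ∧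
    ¬∃ b' : β → M, ∀ (i : ℕ) (φ : L.Formula (↥A ⊕ (β ⊕ γ))),
      φ.Realize (Sum.elim (Subtype.val : ↥A → M) (Sum.elim b c)) →
        φ.Realize (Sum.elim (Subtype.val : ↥A → M) (Sum.elim b' (ci i)))

/-- The partition relation `λ → (β)^{<ω}_γ`. -/
def ArrowRel (lam : Cardinal.{u}) (ot : Ordinal.{u}) (c : Cardinal.{u}) : Prop :=
  ∀ f : Finset lam.ord.ToType → c.ord.ToType,
    ∃ X : Set lam.ord.ToType, Nonempty (↥X ≃o ot.ToType) ∧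
      ∀ s t : Finset lam.ord.ToType, ↑s ⊆ X → ↑t ⊆ X → s.card = t.card → f s = f t

/-- The Lascar strong automorphism group over a set `A` of hyperimaginaries:
generated by pointwise stabilizers of small models fixing every element of `A`. -/
def lascarHypGrp (κ : Cardinal.{u}) (A : Set (Hyp L M)) : Subgroup (M ≃[L] M) :=
  Subgroup.closure {σ | ∃ N : L.ElementarySubstructure M,
    #(N : Set M) < κ ∧ autES L M N ⊆ autHyp L M A ∧ σ ∈ autES L M N}

/-- `b_F ⫝ᵇᵘ_{a_E} c_G` for ultraimaginaries. -/
def IndepU (κ : Cardinal.{u}) {α β γ : Type u} (E : IER L M α) (a : α → M)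
    (F : IER L M β) (b : β → M) (G : IER L M γ) (c : γ → M) : Prop :=
  IndepBU L M κ (autU L M E a) (autU L M E a ∩ autU L M F b)
    (autU L M E a ∩ autU L M G c)

/-! ### Auxiliary material for Statement 14 -/

section Statement14Aux

/-- `X'` is a (strictly monotone) subsequence of `X`. -/
def SubSeq {N β : Type u} (X' X : Seq N β) : Prop :=
  ∃ e : X'.idx → X.idx, StrictMono e ∧ ∀ i, X'.val i = X.val (e i)

theorem subSeq_refl {N β : Type u} (X : Seq N β) : SubSeq X X :=
  ⟨id, strictMono_id, fun _ => rfl⟩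

theorem strictMono_lexMap {α β γ δ : Type*} [Preorder α] [Preorder β] [Preorder γ]
    [Preorder δ] {e : α → γ} {f : β → δ} (he : StrictMono e) (hf : StrictMono f) :
    StrictMono (fun z : α ⊕ₗ β => (toLex (Sum.map e f (ofLex z)) : γ ⊕ₗ δ)) := by
  intro a b hab
  rw [Sum.Lex.lt_def] at hab ⊢
  cases hab with
  | inl h => exact Sum.Lex.inl (he h)
  | inr h => exact Sum.Lex.inr (hf h)
  | sep => exact Sum.Lex.sep _ _

theorem subSeq_concat_left {N β : Type u} (X Y : Seq N β) : SubSeq X (X.concat Y) :=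
  ⟨fun i => toLex (Sum.inl i), fun _ _ h => Sum.Lex.inl_lt_inl_iff.2 h, fun _ => rfl⟩

theorem subSeq_concat_right {N β : Type u} (X Y : Seq N β) : SubSeq Y (X.concat Y) :=
  ⟨fun i => toLex (Sum.inr i), fun _ _ h => Sum.Lex.inr_lt_inr_iff.2 h, fun _ => rfl⟩

theorem indiscOver_comp {A : Set M} {ι ι' : Type u} [LinearOrder ι] [LinearOrder ι']
    {β : Type u} {f : ι → β → M} {g : ι' → ι} (h : IndiscOver L M A f)
    (hg : StrictMono g) : IndiscOver L M A (fun i => f (g i)) :=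
  fun n s t hs ht => h n (g ∘ s) (g ∘ t) (hg.comp hs) (hg.comp ht)

theorem indiscOver_concat_mono {A : Set M} {β : Type u} {X Y X' Y' : Seq M β}
    (h : IndiscOver L M A (X.concat Y).val) (hX : SubSeq X' X) (hY : SubSeq Y' Y) :
    IndiscOver L M A (X'.concat Y').val := by
  obtain ⟨e, he, hev⟩ := hX
  obtain ⟨f, hf, hfv⟩ := hY
  have hg : StrictMono (fun z : X'.idx ⊕ₗ Y'.idx =>
      (toLex (Sum.map e f (ofLex z)) : X.idx ⊕ₗ Y.idx)) := strictMono_lexMap he hf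
  have heq : (X'.concat Y').val = fun z : X'.idx ⊕ₗ Y'.idx =>
      (X.concat Y).val (toLex (Sum.map e f (ofLex z))) := by
    funext z
    rcases z with i | i
    · exact hev i
    · exact hfv i
  have := indiscOver_comp L M h hg
  rw [heq]
  exact this

/-- Restriction of a sequence to a countably infinite subsequence. -/
noncomputable def Seq.shrink {N β : Type u} (X : Seq N β) (hX : Infinite X.idx) :
    Seq N β :=
  letI := hX
  ⟨↥(Set.range (Infinite.natEmbedding X.idx)), fun i => X.val i.1⟩

theorem shrink_subSeq {N β : Type u} (X : Seq N β) (hX : Infinite X.idx) :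
    SubSeq (X.shrink hX) X :=
  ⟨Subtype.val, Subtype.strictMono_coe _, fun _ => rfl⟩

theorem shrink_infinite {N β : Type u} (X : Seq N β) (hX : Infinite X.idx) :
    Infinite (X.shrink hX).idx := by
  letI := hX
  exact (Set.infinite_range_of_injective (Infinite.natEmbedding X.idx).injective).to_subtype

theorem shrink_card_le {N β : Type u} (X : Seq N β) (hX : Infinite X.idx) :
    #(X.shrink hX).idx ≤ ℵ₀ := by
  letI := hX
  exact @Cardinal.mk_le_aleph0 _ (Set.countable_range _).to_subtype

theorem SimSeq.mono {A : Set M} {β : Type u} {X Y X' Y' : Seq M β}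
    (h : SimSeq L M A X Y) (hX : SubSeq X' X) (hY : SubSeq Y' Y)
    (hX' : Infinite X'.idx) (hY' : Infinite Y'.idx) : SimSeq L M A X' Y' :=
  ⟨hX', hY', h.2.2.imp (fun hi => indiscOver_concat_mono L M hi hX hY)
    (fun hi => indiscOver_concat_mono L M hi hY hX)⟩

theorem card_lex_sum_lt {κ : Cardinal.{u}} (hκ : ℵ₀ ≤ κ) {α β : Type u}
    [LinearOrder α] [LinearOrder β] (h1 : #α < κ) (h2 : #β < κ) : #(α ⊕ₗ β) < κ := by
  have : #(α ⊕ₗ β) = #α + #β := by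
    rw [show (α ⊕ₗ β) = (α ⊕ β) from rfl, Cardinal.mk_sum, Cardinal.lift_id,
      Cardinal.lift_id]
  rw [this]
  exact Cardinal.add_lt_of_lt hκ h1 h2

theorem infinite_lex_sum_left {α β : Type u} (h : Infinite α) : Infinite (α ⊕ₗ β) :=
  Infinite.of_injective (fun a => toLex (Sum.inl a))
    (fun a b hab => by simpa using Sum.inl_injective (toLex.injective hab))

theorem sameTypeOver_comp_equiv {A : Set M} (σ : M ≃[L] M)
    (hfix : ∀ a : ↥A, σ a.1 = a.1) {α : Type v} {a b : α → M}
    (h : SameTypeOver L M A a b) : SameTypeOver L M A (⇑σ ∘ a) (⇑σ ∘ b) := by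
  intro φ
  have e : ∀ c : α → M,
      Sum.elim (Subtype.val : ↥A → M) (⇑σ ∘ c) = ⇑σ ∘ Sum.elim Subtype.val c := by
    intro c
    funext z
    rcases z with z | z
    · exact (hfix z).symm
    · rfl
  rw [e, e, FirstOrder.Language.StrongHomClass.realize_formula σ,
    FirstOrder.Language.StrongHomClass.realize_formula σ]
  exact h φ

/-- Core compactness lemma: a (possibly infinite) family of demands, each asking that
two tuples built from small parameters `par` and unknowns `b : TB → M` have the same
type over `A`, can be realized provided every finite subfamily can. -/
theorem core_saturation {κbar : Cardinal.{u}} (mon : Monster L M κbar) {A : Set M}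
    (hA : #A < κbar) {P TB : Type u} (hP : #P < κbar) (hTB : #TB < κbar)
    (par : P → M) {ι : Type*} {ar : ι → Type u} (lhs rhs : ∀ j, ar j → P ⊕ TB)
    (finsat : ∀ G : Finset ι, ∃ b : TB → M, ∀ j ∈ G,
      SameTypeOver L M A (Sum.elim par b ∘ lhs j) (Sum.elim par b ∘ rhs j)) :
    ∃ b : TB → M, ∀ j,
      SameTypeOver L M A (Sum.elim par b ∘ lhs j) (Sum.elim par b ∘ rhs j) := by
  classical
  -- relabeling of an instance side into the saturation alphabet
  let re : ∀ j, (ar j → P ⊕ TB) → (↥A ⊕ ar j → (↥A ⊕ P) ⊕ TB) := fun j u =>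
    Sum.elim (Sum.inl ∘ Sum.inl) (fun ix => Sum.elim (Sum.inl ∘ Sum.inr) Sum.inr (u ix))
  let fml : ∀ j, L.Formula (↥A ⊕ ar j) → L.Formula ((↥A ⊕ P) ⊕ TB) := fun j φ =>
    (φ.relabel (re j (lhs j))).iff (φ.relabel (re j (rhs j)))
  have key : ∀ (b : TB → M) (j) (u : ar j → P ⊕ TB),
      Sum.elim (Sum.elim (Subtype.val : ↥A → M) par) b ∘ re j u =
        Sum.elim (Subtype.val : ↥A → M) (Sum.elim par b ∘ u) := by
    intro b j u
    funext z
    rcases z with z | z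
    · rfl
    · rcases hz : u z with x | x <;> simp [re, hz]
  have hreal : ∀ (b : TB → M) (j) (φ : L.Formula (↥A ⊕ ar j)),
      ((fml j φ).Realize (Sum.elim (Sum.elim (Subtype.val : ↥A → M) par) b) ↔
        (φ.Realize (Sum.elim (Subtype.val : ↥A → M) (Sum.elim par b ∘ lhs j)) ↔
          φ.Realize (Sum.elim (Subtype.val : ↥A → M) (Sum.elim par b ∘ rhs j)))) := by
    intro b j φ
    rw [show fml j φ = (φ.relabel (re j (lhs j))).iff (φ.relabel (re j (rhs j))) from rfl,
      Language.Formula.realize_iff, Language.Formula.realize_relabel,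
      Language.Formula.realize_relabel, key, key]
  have hcard1 : #(↥A ⊕ P) < κbar := by
    have : #(↥A ⊕ P) = #(↥A) + #P := by
      rw [Cardinal.mk_sum, Cardinal.lift_id, Cardinal.lift_id]
    rw [this]
    exact Cardinal.add_lt_of_lt mon.isRegular.aleph0_le hA hP
  have hfin : ∀ s : Finset (L.Formula ((↥A ⊕ P) ⊕ TB)), ↑s ⊆ ⋃ j, Set.range (fml j) →
      ∃ b : TB → M, ∀ φ ∈ s,
        φ.Realize (Sum.elim (Sum.elim (Subtype.val : ↥A → M) par) b) := by
    intro s hs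
    have hch : ∀ ψ : {x // x ∈ s}, ∃ j φ, fml j φ = ψ.1 := by
      intro ψ
      have := hs ψ.2
      rw [Set.mem_iUnion] at this
      obtain ⟨j, φ, hφ⟩ := this
      exact ⟨j, φ, hφ⟩
    choose jf φf hjφ using hch
    obtain ⟨b, hb⟩ := finsat (s.attach.image jf)
    refine ⟨b, fun ψ hψ => ?_⟩
    have h2 : fml (jf ⟨ψ, hψ⟩) (φf ⟨ψ, hψ⟩) = ψ := hjφ ⟨ψ, hψ⟩
    rw [← h2, hreal]
    exact hb (jf ⟨ψ, hψ⟩) (Finset.mem_image_of_mem _ (s.mem_attach ⟨ψ, hψ⟩)) (φf ⟨ψ, hψ⟩)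
  obtain ⟨b, hb⟩ := mon.saturated (↥A ⊕ P) TB hcard1 hTB
    (Sum.elim (Subtype.val : ↥A → M) par)
    (⋃ j, Set.range (fml j)) hfin
  refine ⟨b, fun j φ => ?_⟩
  have := hb (fml j φ) (Set.mem_iUnion.2 ⟨j, Set.mem_range_self φ⟩)
  rw [hreal] at this
  exact this

/-- Translation of a pattern on `ιH ⊕ₗ T` into parameter/unknown positions. -/
def uOfPat {ιH T β : Type u} {n : ℕ} (s : Fin n → ιH ⊕ₗ T) :
    Fin n × β → (ιH × β) ⊕ (T × β) :=
  fun z => Sum.elim (fun h => Sum.inl (h, z.2)) (fun t' => Sum.inr (t', z.2)) (ofLex (s z.1))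

open Classical in
/-- The `ιH`-positions mentioned by a pattern. -/
noncomputable def hPart {ιH T : Type u} {n : ℕ} (s : Fin n → ιH ⊕ₗ T) : Finset ιH :=
  Finset.univ.biUnion fun i : Fin n =>
    Sum.elim (fun h => {h}) (fun _ => (∅ : Finset ιH)) (ofLex (s i))

open Classical in
/-- The `T`-positions mentioned by a pattern. -/
noncomputable def tPart {ιH T : Type u} {n : ℕ} (s : Fin n → ιH ⊕ₗ T) : Finset T :=
  Finset.univ.biUnion fun i : Fin n =>
    Sum.elim (fun _ => (∅ : Finset T)) (fun t' => {t'}) (ofLex (s i))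

theorem mem_hPart {ιH T : Type u} {n : ℕ} {s : Fin n → ιH ⊕ₗ T} {i : Fin n} {h : ιH}
    (hc : ofLex (s i) = Sum.inl h) : h ∈ hPart s := by
  simp only [hPart, Finset.mem_biUnion]
  exact ⟨i, Finset.mem_univ i, by rw [hc]; exact Finset.mem_singleton_self h⟩

theorem mem_tPart {ιH T : Type u} {n : ℕ} {s : Fin n → ιH ⊕ₗ T} {i : Fin n} {t' : T}
    (hc : ofLex (s i) = Sum.inr t') : t' ∈ tPart s := by
  simp only [tPart, Finset.mem_biUnion]
  exact ⟨i, Finset.mem_univ i, by rw [hc]; exact Finset.mem_singleton_self t'⟩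

/-- Pairs of strictly monotone patterns, the instance index for our saturation
arguments. -/
def PatPair (ιH T : Type u) [LinearOrder ιH] [LinearOrder T] : Type u :=
  Σ n : ℕ, {st : (Fin n → ιH ⊕ₗ T) × (Fin n → ιH ⊕ₗ T) //
    StrictMono st.1 ∧ StrictMono st.2}

/-- **Extension lemma.** Any infinite small `A`-indiscernible sequence `H` can be
extended by a tail of any prescribed small order type `T`, keeping `H + Z`
`A`-indiscernible. -/
theorem append_lemma {κbar : Cardinal.{u}} (mon : Monster L M κbar) {A : Set M}
    (hA : #A < κbar) {β : Type u} (hβ : #β < κbar) (H : Seq M β)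
    (hHinf : Infinite H.idx) (hHsm : #H.idx < κbar) (hHind : IndiscOver L M A H.val)
    (T : Type u) [LinearOrder T] (hT : #T < κbar) :
    ∃ v : T → β → M, IndiscOver L M A ((H.concat ⟨T, v⟩).val) := by
  classical
  rcases isEmpty_or_nonempty β with hβe | hβn
  · refine ⟨fun _ x => isEmptyElim x, ?_⟩
    intro n s t hs ht
    have : flatten M (H.concat ⟨T, fun _ x => isEmptyElim x⟩).val s =
        flatten M (H.concat ⟨T, fun _ x => isEmptyElim x⟩).val t :=
      funext fun p => isEmptyElim p.2
    rw [this]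
    exact fun φ => Iff.rfl
  haveI : Nonempty H.idx := inferInstance
  haveI : Nonempty M := ⟨H.val (Classical.arbitrary _) (Classical.arbitrary _)⟩
  have hPcard : #(H.idx × β) < κbar := by
    rw [Cardinal.mk_prod, Cardinal.lift_id, Cardinal.lift_id]
    exact Cardinal.mul_lt_of_lt mon.isRegular.aleph0_le hHsm hβ
  have hTBcard : #(T × β) < κbar := by
    rw [Cardinal.mk_prod, Cardinal.lift_id, Cardinal.lift_id]
    exact Cardinal.mul_lt_of_lt mon.isRegular.aleph0_le hT hβ
  have hcore := core_saturation L M mon hA hPcard hTBcard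
    (fun z : H.idx × β => H.val z.1 z.2) (ι := PatPair H.idx T)
    (ar := fun j => Fin j.1 × β)
    (fun j => uOfPat j.2.1.1) (fun j => uOfPat j.2.1.2) ?_
  · obtain ⟨b, hb⟩ := hcore
    refine ⟨fun t' x => b (t', x), ?_⟩
    intro n s t hs ht
    have key : ∀ u : Fin n → H.idx ⊕ₗ T,
        flatten M (H.concat ⟨T, fun t' x => b (t', x)⟩).val u =
          Sum.elim (fun z : H.idx × β => H.val z.1 z.2) b ∘ uOfPat u := by
      intro u
      funext z
      show (H.concat ⟨T, fun t' x => b (t', x)⟩).val (u z.1) z.2 = _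
      rcases hz : ofLex (u z.1) with a | a <;>
        simp [Seq.concat, uOfPat, hz]
    have := hb ⟨n, ⟨(s, t), hs, ht⟩⟩
    rw [key s, key t]
    exact this
  · -- finite satisfiability via homogeneity
    intro G
    -- mentioned positions
    set HS : Finset H.idx := G.biUnion (fun j => hPart j.2.1.1 ∪ hPart j.2.1.2) with hHS
    set TS : Finset T := G.biUnion (fun j => tPart j.2.1.1 ∪ tPart j.2.1.2) with hTS
    obtain ⟨D, hD⟩ := Infinite.exists_subset_card_eq H.idx (HS.card + TS.card)
    set d : Fin (HS.card + TS.card) ↪o H.idx := D.orderEmbOfFin hD with hd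
    set eH : Fin HS.card ≃o ↥HS := HS.orderIsoOfFin rfl with heH
    set eT : Fin TS.card ≃o ↥TS := TS.orderIsoOfFin rfl with heT
    have hmonod : StrictMono (fun i : Fin HS.card => d (Fin.castAdd TS.card i)) := by
      intro i j hij
      exact d.strictMono (by rw [Fin.lt_def]; simpa using Fin.lt_def.1 hij)
    have hmonoe : StrictMono (fun i : Fin HS.card => ((eH i : ↥HS) : H.idx)) :=
      fun i j hij => Subtype.coe_lt_coe.2 (eH.strictMono hij)
    have hsame := hHind HS.card _ _ hmonod hmonoe
    have hcard : #(↥A ⊕ (Fin HS.card × β)) < κbar := by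
      have h1 : #(Fin HS.card × β) < κbar := by
        rw [Cardinal.mk_prod, Cardinal.lift_uzero, Cardinal.mk_fin, Cardinal.lift_natCast]
        exact Cardinal.mul_lt_of_lt mon.isRegular.aleph0_le
          ((Cardinal.nat_lt_aleph0 _).trans_le mon.isRegular.aleph0_le) hβ
      rw [Cardinal.mk_sum, Cardinal.lift_id, Cardinal.lift_id]
      exact Cardinal.add_lt_of_lt mon.isRegular.aleph0_le hA h1
    obtain ⟨σ, hσ⟩ := mon.homog (↥A ⊕ (Fin HS.card × β))
      (Sum.elim (Subtype.val : ↥A → M)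
        (flatten M H.val (fun i : Fin HS.card => d (Fin.castAdd TS.card i))))
      (Sum.elim (Subtype.val : ↥A → M)
        (flatten M H.val (fun i : Fin HS.card => ((eH i : ↥HS) : H.idx))))
      hcard hsame
    have hfixA : ∀ a : ↥A, σ a.1 = a.1 := fun a => hσ (Sum.inl a)
    have hmapH : ∀ (i : Fin HS.card) (x : β),
        σ (H.val (d (Fin.castAdd TS.card i)) x) = H.val ((eH i : ↥HS) : H.idx) x :=
      fun i x => hσ (Sum.inr (i, x))
    refine ⟨fun tb => if hmem : tb.1 ∈ TS then
      σ (H.val (d (Fin.natAdd HS.card (eT.symm ⟨tb.1, hmem⟩))) tb.2)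
      else Classical.arbitrary M, ?_⟩
    rintro ⟨n, ⟨⟨s, t⟩, hs, ht⟩⟩ hjG
    -- the two patterns mention only `HS` and `TS`
    have hmemu : ∀ u : Fin n → H.idx ⊕ₗ T, (u = s ∨ u = t) → ∀ i : Fin n,
        (∀ h, ofLex (u i) = Sum.inl h → h ∈ HS) ∧
        (∀ t', ofLex (u i) = Sum.inr t' → t' ∈ TS) := by
      rintro u hu i
      constructor
      · intro h hc
        rw [hHS]
        refine Finset.mem_biUnion.2 ⟨⟨n, ⟨(s, t), hs, ht⟩⟩, hjG, ?_⟩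
        rcases hu with rfl | rfl
        · exact Finset.mem_union_left _ (mem_hPart hc)
        · exact Finset.mem_union_right _ (mem_hPart hc)
      · intro t' hc
        rw [hTS]
        refine Finset.mem_biUnion.2 ⟨⟨n, ⟨(s, t), hs, ht⟩⟩, hjG, ?_⟩
        rcases hu with rfl | rfl
        · exact Finset.mem_union_left _ (mem_tPart hc)
        · exact Finset.mem_union_right _ (mem_tPart hc)
    have build : ∀ u : Fin n → H.idx ⊕ₗ T, StrictMono u →
        (∀ i : Fin n, (∀ h, ofLex (u i) = Sum.inl h → h ∈ HS) ∧
          (∀ t', ofLex (u i) = Sum.inr t' → t' ∈ TS)) →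
        ∃ u' : Fin n → H.idx, StrictMono u' ∧
          (Sum.elim (fun z : H.idx × β => H.val z.1 z.2)
              (fun tb : T × β => if hmem : tb.1 ∈ TS then
                σ (H.val (d (Fin.natAdd HS.card (eT.symm ⟨tb.1, hmem⟩))) tb.2)
                else Classical.arbitrary M) ∘ uOfPat u) =
            (⇑σ ∘ flatten M H.val u') := by
      intro u hu hmu
      refine ⟨fun i => Sum.elim
        (fun h => if hh : h ∈ HS then d (Fin.castAdd TS.card (eH.symm ⟨h, hh⟩))
          else Classical.arbitrary H.idx)
        (fun t' => if ht' : t' ∈ TS then d (Fin.natAdd HS.card (eT.symm ⟨t', ht'⟩))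
          else Classical.arbitrary H.idx)
        (ofLex (u i)), ?_, ?_⟩
      · intro i i' hii
        have hlt := hu hii
        rw [Sum.Lex.lt_def] at hlt
        rcases h1 : ofLex (u i) with a | a <;> rcases h2 : ofLex (u i') with b | b <;>
          rw [h1, h2] at hlt <;>
          simp only [h1, h2, Sum.elim_inl, Sum.elim_inr]
        · have hab : a < b := by cases hlt with | inl h => exact h
          have ha := (hmu i).1 a h1
          have hb2 := (hmu i').1 b h2
          rw [dif_pos ha, dif_pos hb2]
          apply d.strictMono
          rw [Fin.lt_def]
          have hlt2 : (⟨a, ha⟩ : {x // x ∈ HS}) < ⟨b, hb2⟩ := Subtype.mk_lt_mk.2 hab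
          simpa using Fin.lt_def.1 (eH.symm.strictMono hlt2)
        · have ha := (hmu i).1 a h1
          have hb2 := (hmu i').2 b h2
          rw [dif_pos ha, dif_pos hb2]
          apply d.strictMono
          rw [Fin.lt_def]
          have := (eH.symm ⟨a, ha⟩).isLt
          simp only [Fin.coe_castAdd, Fin.coe_natAdd]
          omega
        · exact absurd hlt (Sum.lex_inr_inl)
        · have hab : a < b := by cases hlt with | inr h => exact h
          have ha := (hmu i).2 a h1
          have hb2 := (hmu i').2 b h2
          rw [dif_pos ha, dif_pos hb2]
          apply d.strictMono
          rw [Fin.lt_def]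
          have hlt2 : (⟨a, ha⟩ : {x // x ∈ TS}) < ⟨b, hb2⟩ := Subtype.mk_lt_mk.2 hab
          have := Fin.lt_def.1 (eT.symm.strictMono hlt2)
          simp only [Fin.coe_natAdd]
          omega
      · funext z
        simp only [Function.comp_apply, flatten]
        rcases hz : ofLex (u z.1) with a | a
        · have ha := (hmu z.1).1 a hz
          simp only [uOfPat, hz, Sum.elim_inl, Sum.elim_inr, dif_pos ha]
          rw [hmapH (eH.symm ⟨a, ha⟩) z.2]
          simp
        · have ha := (hmu z.1).2 a hz
          simp only [uOfPat, hz, Sum.elim_inl, Sum.elim_inr, dif_pos ha]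
    obtain ⟨s', hs', hseq⟩ := build s hs (hmemu s (Or.inl rfl))
    obtain ⟨t', ht', hteq⟩ := build t ht (hmemu t (Or.inr rfl))
    show SameTypeOver L M A _ _
    rw [hseq, hteq]
    exact sameTypeOver_comp_equiv L M σ hfixA (hHind n s' t' hs' ht')

/-- Translation of a pattern on `T ⊕ₗ ι` (unknown head, known tail). -/
def uOfPatHead {T ι β : Type u} {n : ℕ} (s : Fin n → T ⊕ₗ ι) :
    Fin n × β → (ι × β) ⊕ (T × β) :=
  fun z => Sum.elim (fun t' => Sum.inr (t', z.2)) (fun l => Sum.inl (l, z.2)) (ofLex (s z.1))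

/-- One sampling step: if the `T`-positions of two strictly monotone patterns are
interpreted by (images of) elements of `K`, the resulting tuples have the same type
over `A`, by indiscernibility of `K + Lx`. -/
theorem sample_step {A : Set M} {β : Type u} (K Lx : Seq M β)
    (hind : IndiscOver L M A (K.concat Lx).val) {T : Type u} [LinearOrder T]
    (TS : Finset T) (e : ↥TS → K.idx) (hmono : StrictMono e) (k₀ : K.idx)
    (bW : T × β → M)
    (hbW : ∀ (t : T) (h : t ∈ TS) (x : β), bW (t, x) = K.val (e ⟨t, h⟩) x)
    {n : ℕ} (s t : Fin n → T ⊕ₗ Lx.idx) (hs : StrictMono s) (ht : StrictMono t)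
    (hmem : ∀ (u : Fin n → T ⊕ₗ Lx.idx), u = s ∨ u = t →
      ∀ (i : Fin n) (t' : T), ofLex (u i) = Sum.inl t' → t' ∈ TS) :
    SameTypeOver L M A
      (Sum.elim (fun z : Lx.idx × β => Lx.val z.1 z.2) bW ∘ uOfPatHead s)
      (Sum.elim (fun z : Lx.idx × β => Lx.val z.1 z.2) bW ∘ uOfPatHead t) := by
  classical
  have build : ∀ (u : Fin n → T ⊕ₗ Lx.idx), StrictMono u →
      (∀ (i : Fin n) (t' : T), ofLex (u i) = Sum.inl t' → t' ∈ TS) →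
      ∃ u' : Fin n → K.idx ⊕ₗ Lx.idx, StrictMono u' ∧
        (Sum.elim (fun z : Lx.idx × β => Lx.val z.1 z.2) bW ∘ uOfPatHead u) =
          flatten M (K.concat Lx).val u' := by
    intro u hu hmu
    refine ⟨fun i => Sum.elim
      (fun t' => toLex (Sum.inl (if h : t' ∈ TS then e ⟨t', h⟩ else k₀)))
      (fun l => toLex (Sum.inr l)) (ofLex (u i)), ?_, ?_⟩
    · intro i i' hii
      have hlt := hu hii
      rw [Sum.Lex.lt_def] at hlt
      rcases h1 : ofLex (u i) with a | a <;> rcases h2 : ofLex (u i') with b | b <;>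
        rw [h1, h2] at hlt <;>
        simp only [h1, h2, Sum.elim_inl, Sum.elim_inr]
      · have hab : a < b := by cases hlt with | inl h => exact h
        have ha := hmu i a h1
        have hb2 := hmu i' b h2
        rw [dif_pos ha, dif_pos hb2]
        refine Sum.Lex.inl_lt_inl_iff.2 (hmono ?_)
        exact Subtype.mk_lt_mk.2 hab
      · exact Sum.Lex.inl_lt_inr _ _
      · exact absurd hlt (Sum.lex_inr_inl)
      · have hab : a < b := by cases hlt with | inr h => exact h
        exact Sum.Lex.inr_lt_inr_iff.2 hab
    · funext z
      simp only [Function.comp_apply, flatten]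
      rcases hz : ofLex (u z.1) with a | a
      · have ha := hmu z.1 a hz
        simp only [uOfPatHead, hz, Sum.elim_inl, Sum.elim_inr, dif_pos ha]
        rw [hbW a ha z.2]
        rfl
      · simp only [uOfPatHead, hz, Sum.elim_inl, Sum.elim_inr]
        rfl
  obtain ⟨s', hs', hseq⟩ := build s hs (hmem s (Or.inl rfl))
  obtain ⟨t', ht', hteq⟩ := build t ht (hmem t (Or.inr rfl))
  rw [hseq, hteq]
  exact hind n s' t' hs' ht'


/-- **Head replacement lemma.** If `K + Lc` and `K + Lc'` are `A`-indiscernible with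
`K` infinite and `Lc`, `Lc'` small, then there is a sequence of any prescribed small
order type `T` that can replace `K` in both. -/
theorem head_replace {κbar : Cardinal.{u}} (mon : Monster L M κbar) {A : Set M}
    (hA : #A < κbar) {β : Type u} (hβ : #β < κbar) (K Lc Lc' : Seq M β)
    (hKinf : Infinite K.idx) (hLsm : #Lc.idx < κbar) (hL'sm : #Lc'.idx < κbar)
    (h1 : IndiscOver L M A (K.concat Lc).val)
    (h2 : IndiscOver L M A (K.concat Lc').val)
    (T : Type u) [LinearOrder T] (hT : #T < κbar) :
    ∃ v : T → β → M, IndiscOver L M A (((⟨T, v⟩ : Seq M β)).concat Lc).val ∧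
      IndiscOver L M A (((⟨T, v⟩ : Seq M β)).concat Lc').val := by
  classical
  rcases isEmpty_or_nonempty β with hβe | hβn
  · refine ⟨fun _ x => isEmptyElim x, ?_, ?_⟩
    · intro n s t hs ht
      have he : flatten M (((⟨T, fun _ x => isEmptyElim x⟩ : Seq M β)).concat Lc).val s =
          flatten M (((⟨T, fun _ x => isEmptyElim x⟩ : Seq M β)).concat Lc).val t :=
        funext fun p => isEmptyElim p.2
      rw [he]
      exact fun φ => Iff.rfl
    · intro n s t hs ht
      have he : flatten M (((⟨T, fun _ x => isEmptyElim x⟩ : Seq M β)).concat Lc').val s =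
          flatten M (((⟨T, fun _ x => isEmptyElim x⟩ : Seq M β)).concat Lc').val t :=
        funext fun p => isEmptyElim p.2
      rw [he]
      exact fun φ => Iff.rfl
  haveI : Nonempty K.idx := inferInstance
  haveI : Nonempty M := ⟨K.val (Classical.arbitrary _) (Classical.arbitrary _)⟩
  have hprod : ∀ {γ : Type u}, #γ < κbar → #(γ × β) < κbar := by
    intro γ hγ
    rw [Cardinal.mk_prod, Cardinal.lift_id, Cardinal.lift_id]
    exact Cardinal.mul_lt_of_lt mon.isRegular.aleph0_le hγ hβ
  have hPcard : #((Lc.idx × β) ⊕ (Lc'.idx × β)) < κbar := by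
    rw [Cardinal.mk_sum, Cardinal.lift_id, Cardinal.lift_id]
    exact Cardinal.add_lt_of_lt mon.isRegular.aleph0_le (hprod hLsm) (hprod hL'sm)
  have hcore := core_saturation L M mon hA hPcard (hprod hT)
    (Sum.elim (fun z : Lc.idx × β => Lc.val z.1 z.2)
      (fun z : Lc'.idx × β => Lc'.val z.1 z.2))
    (ι := PatPair T Lc.idx ⊕ PatPair T Lc'.idx)
    (ar := fun j => match j with
      | .inl j => Fin j.1 × β
      | .inr j => Fin j.1 × β)
    (fun j => match j with
      | .inl j => Sum.map Sum.inl id ∘ uOfPatHead j.2.1.1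
      | .inr j => Sum.map Sum.inr id ∘ uOfPatHead j.2.1.1)
    (fun j => match j with
      | .inl j => Sum.map Sum.inl id ∘ uOfPatHead j.2.1.2
      | .inr j => Sum.map Sum.inr id ∘ uOfPatHead j.2.1.2) ?_
  · obtain ⟨b, hb⟩ := hcore
    have keyL : ∀ {n : ℕ} (u : Fin n → T ⊕ₗ Lc.idx),
        flatten M (((⟨T, fun t' x => b (t', x)⟩ : Seq M β)).concat Lc).val u =
          Sum.elim (Sum.elim (fun z : Lc.idx × β => Lc.val z.1 z.2)
            (fun z : Lc'.idx × β => Lc'.val z.1 z.2)) b ∘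
            (Sum.map Sum.inl id ∘ uOfPatHead u) := by
      intro n u
      funext z
      show ((⟨T, fun t' x => b (t', x)⟩ : Seq M β).concat Lc).val (u z.1) z.2 = _
      rcases hz : ofLex (u z.1) with a | a <;>
        simp [Seq.concat, uOfPatHead, hz]
    have keyR : ∀ {n : ℕ} (u : Fin n → T ⊕ₗ Lc'.idx),
        flatten M (((⟨T, fun t' x => b (t', x)⟩ : Seq M β)).concat Lc').val u =
          Sum.elim (Sum.elim (fun z : Lc.idx × β => Lc.val z.1 z.2)
            (fun z : Lc'.idx × β => Lc'.val z.1 z.2)) b ∘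
            (Sum.map Sum.inr id ∘ uOfPatHead u) := by
      intro n u
      funext z
      show ((⟨T, fun t' x => b (t', x)⟩ : Seq M β).concat Lc').val (u z.1) z.2 = _
      rcases hz : ofLex (u z.1) with a | a <;>
        simp [Seq.concat, uOfPatHead, hz]
    refine ⟨fun t' x => b (t', x), ?_, ?_⟩
    · intro n s t hs ht
      have := hb (Sum.inl ⟨n, ⟨(s, t), hs, ht⟩⟩)
      rw [keyL s, keyL t]
      exact this
    · intro n s t hs ht
      have := hb (Sum.inr ⟨n, ⟨(s, t), hs, ht⟩⟩)
      rw [keyR s, keyR t]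
      exact this
  · -- finite satisfiability by sampling from `K`
    intro G
    set TS : Finset T := G.biUnion (Sum.elim
      (fun j => hPart j.2.1.1 ∪ hPart j.2.1.2)
      (fun j => hPart j.2.1.1 ∪ hPart j.2.1.2)) with hTS
    obtain ⟨D, hD⟩ := Infinite.exists_subset_card_eq K.idx TS.card
    set d : Fin TS.card ↪o K.idx := D.orderEmbOfFin hD with hd
    set eT : Fin TS.card ≃o ↥TS := TS.orderIsoOfFin rfl with heT
    set e : ↥TS → K.idx := fun t' => d (eT.symm t') with he
    have hemono : StrictMono e := fun a b hab => d.strictMono (eT.symm.strictMono hab)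
    set bW : T × β → M := fun tb => if h : tb.1 ∈ TS then K.val (e ⟨tb.1, h⟩) tb.2
      else Classical.arbitrary M with hbWdef
    have hbW : ∀ (t : T) (h : t ∈ TS) (x : β), bW (t, x) = K.val (e ⟨t, h⟩) x := by
      intro t h x
      rw [hbWdef]
      exact dif_pos h
    refine ⟨bW, ?_⟩
    rintro (⟨n, ⟨⟨s, t⟩, hs, ht⟩⟩ | ⟨n, ⟨⟨s, t⟩, hs, ht⟩⟩) hjG
    · have hmem : ∀ (u : Fin n → T ⊕ₗ Lc.idx), u = s ∨ u = t →
          ∀ (i : Fin n) (t' : T), ofLex (u i) = Sum.inl t' → t' ∈ TS := by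
        rintro u hu i t' hc
        rw [hTS]
        refine Finset.mem_biUnion.2 ⟨Sum.inl ⟨n, ⟨(s, t), hs, ht⟩⟩, hjG, ?_⟩
        rcases hu with rfl | rfl
        · exact Finset.mem_union_left _ (mem_hPart hc)
        · exact Finset.mem_union_right _ (mem_hPart hc)
      have := sample_step L M K Lc h1 TS e hemono (Classical.arbitrary _) bW hbW
        s t hs ht hmem
      have eqc : ∀ (u : Fin n → T ⊕ₗ Lc.idx),
          (Sum.elim (fun z : Lc.idx × β => Lc.val z.1 z.2) bW ∘ uOfPatHead u) =
          (Sum.elim (Sum.elim (fun z : Lc.idx × β => Lc.val z.1 z.2)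
            (fun z : Lc'.idx × β => Lc'.val z.1 z.2)) bW ∘
            (Sum.map Sum.inl id ∘ uOfPatHead u)) := by
        intro u
        funext z
        rcases hz : ofLex (u z.1) with a | a <;> simp [uOfPatHead, hz]
      rw [eqc s, eqc t] at this
      exact this
    · have hmem : ∀ (u : Fin n → T ⊕ₗ Lc'.idx), u = s ∨ u = t →
          ∀ (i : Fin n) (t' : T), ofLex (u i) = Sum.inl t' → t' ∈ TS := by
        rintro u hu i t' hc
        rw [hTS]
        refine Finset.mem_biUnion.2 ⟨Sum.inr ⟨n, ⟨(s, t), hs, ht⟩⟩, hjG, ?_⟩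
        rcases hu with rfl | rfl
        · exact Finset.mem_union_left _ (mem_hPart hc)
        · exact Finset.mem_union_right _ (mem_hPart hc)
      have := sample_step L M K Lc' h2 TS e hemono (Classical.arbitrary _) bW hbW
        s t hs ht hmem
      have eqc : ∀ (u : Fin n → T ⊕ₗ Lc'.idx),
          (Sum.elim (fun z : Lc'.idx × β => Lc'.val z.1 z.2) bW ∘ uOfPatHead u) =
          (Sum.elim (Sum.elim (fun z : Lc.idx × β => Lc.val z.1 z.2)
            (fun z : Lc'.idx × β => Lc'.val z.1 z.2)) bW ∘
            (Sum.map Sum.inr id ∘ uOfPatHead u)) := by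
        intro u
        funext z
        rcases hz : ofLex (u z.1) with a | a <;> simp [uOfPatHead, hz]
      rw [eqc s, eqc t] at this
      exact this


/-- A `≈`-connection can be realized by a finite path of `∼`-steps. -/
theorem approx_path {A : Set M} {β : Type u} {X Y : Seq M β}
    (h : ApproxSeq L M A X Y) :
    ∃ k, 0 < k ∧ ∃ f : ℕ → Seq M β, f 0 = X ∧ f k = Y ∧
      ∀ i < k, SimSeq L M A (f i) (f (i + 1)) := by
  induction h using Relation.TransGen.head_induction_on with
  | @single a hr =>
    refine ⟨1, Nat.one_pos, fun i => if i = 0 then a else Y, by simp, by simp, ?_⟩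
    intro i hi
    have h0 : i = 0 := by omega
    subst h0
    simp only [if_pos rfl, if_neg one_ne_zero]
    exact hr
  | @head a c hr htg IH =>
    obtain ⟨k, hk, f, hf0, hfk, hstep⟩ := IH
    refine ⟨k + 1, Nat.succ_pos _, fun i => if i = 0 then a else f (i - 1), by simp, ?_, ?_⟩
    · simp [hfk]
    · intro i hi
      rcases Nat.eq_zero_or_pos i with rfl | hip
      · simp only [if_pos rfl, if_neg one_ne_zero]
        rw [show (1 : ℕ) - 1 = 0 from rfl, hf0]
        exact hr
      · have h1 : i ≠ 0 := hip.ne'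
        have h2 : i + 1 ≠ 0 := by omega
        simp only [if_neg h1, if_neg h2]
        have e : i + 1 - 1 = (i - 1) + 1 := by omega
        rw [e]
        exact hstep (i - 1) (by omega)


end Statement14Aux

/-- For infinite `A`-indiscernible sequences `I`, `J` and
infinite order types `O`, `O'`: `I ≈_A J` iff there is a chain
`K₀, L₀, K₁, …, L_{n−1}, K_n` from `I` to `J` with the inner `K_i` of order type
`O`, the `L_i` of order type `O'`, and `K_i + L_i`, `K_{i+1} + L_i` all
`A`-indiscernible. -/
theorem statement_14 (L : FirstOrder.Language.{u, u}) (M : Type u) [L.Structure M]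
    (κbar : Cardinal.{u}) (_mon : Monster L M κbar)
    (A : Set M) (hA : #A < κbar) {β : Type u} (hβ : #β < κbar)
    (I J : Seq M β) (hIsm : #I.idx < κbar) (hJsm : #J.idx < κbar)
    (hIinf : Infinite I.idx) (hJinf : Infinite J.idx)
    (hIind : IndiscOver L M A I.val) (hJind : IndiscOver L M A J.val)
    (O O' : Type u) [LinearOrder O] [LinearOrder O']
    (hO : Infinite O) (hO' : Infinite O') (hOsm : #O < κbar) (hO'sm : #O' < κbar) :
    ApproxSeq L M A I J ↔
      ∃ (n : ℕ) (K : Fin (n + 1) → Seq M β) (Lc : Fin n → Seq M β),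
        K 0 = I ∧ K (Fin.last n) = J ∧
        (∀ i : Fin (n + 1), 0 < (i : ℕ) → (i : ℕ) < n → Nonempty ((K i).idx ≃o O)) ∧
        (∀ i : Fin n, Nonempty ((Lc i).idx ≃o O')) ∧
        ∀ i : Fin n,
          IndiscOver L M A ((K i.castSucc).concat (Lc i)).val ∧
          IndiscOver L M A ((K i.succ).concat (Lc i)).val := by
  constructor
  · intro happ
    obtain ⟨k, hk, f, hf0, hfk, hstep⟩ := approx_path L M happ
    have hinff : ∀ i ≤ k, Infinite (f i).idx := by
      intro i hi
      rcases lt_or_eq_of_le hi with hlt | rfl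
      · exact (hstep i hlt).1
      · have h' := (hstep (i - 1) (by omega)).2.1
        have e : i - 1 + 1 = i := by omega
        rwa [e] at h'
    set g : ℕ → Seq M β := fun i => if h0 : i = 0 then I else if hik : k ≤ i then J
      else (f i).shrink (hinff i (le_of_lt (lt_of_not_ge hik))) with hg
    have hg0 : g 0 = I := by simp [hg]
    have hgk : g k = J := by
      rw [hg]
      simp only [dif_neg hk.ne', dif_pos le_rfl]
    have hsub : ∀ i ≤ k, SubSeq (g i) (f i) := by
      intro i hi
      by_cases h0 : i = 0
      · subst h0
        rw [hg0, hf0]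
        exact subSeq_refl I
      by_cases hik : k ≤ i
      · have hik' : i = k := le_antisymm hi hik
        subst hik'
        rw [hgk, hfk]
        exact subSeq_refl J
      · rw [hg]
        simp only [dif_neg h0, dif_neg hik]
        exact shrink_subSeq _ _
    have hginf : ∀ i ≤ k, Infinite (g i).idx := by
      intro i hi
      by_cases h0 : i = 0
      · subst h0; rw [hg0]; exact hIinf
      by_cases hik : k ≤ i
      · have hik' : i = k := le_antisymm hi hik
        subst hik'; rw [hgk]; exact hJinf
      · rw [hg]
        simp only [dif_neg h0, dif_neg hik]
        exact shrink_infinite _ _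
    have hgsm : ∀ i ≤ k, #(g i).idx < κbar := by
      intro i hi
      by_cases h0 : i = 0
      · subst h0; rw [hg0]; exact hIsm
      by_cases hik : k ≤ i
      · have hik' : i = k := le_antisymm hi hik
        subst hik'; rw [hgk]; exact hJsm
      · rw [hg]
        simp only [dif_neg h0, dif_neg hik]
        exact (shrink_card_le _ _).trans_lt _mon.aleph0_lt
    have hgstep : ∀ i, i < k → SimSeq L M A (g i) (g (i + 1)) := by
      intro i hi
      exact SimSeq.mono L M (hstep i hi) (hsub i hi.le) (hsub (i + 1) (by omega))
        (hginf i hi.le) (hginf (i + 1) (by omega))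
    have hLex : ∀ i, i < k → ∃ v : O' → β → M,
        IndiscOver L M A ((g i).concat ⟨O', v⟩).val ∧
        IndiscOver L M A ((g (i + 1)).concat ⟨O', v⟩).val := by
      intro i hi
      obtain ⟨hi1, hi2, hc | hc⟩ := hgstep i hi
      · have hinfH : Infinite ((g i).concat (g (i + 1))).idx := infinite_lex_sum_left hi1
        have hsmH : #((g i).concat (g (i + 1))).idx < κbar :=
          card_lex_sum_lt _mon.isRegular.aleph0_le (hgsm i hi.le) (hgsm (i + 1) (by omega))
        obtain ⟨v, hv⟩ := append_lemma L M _mon hA hβ ((g i).concat (g (i + 1)))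
          hinfH hsmH hc O' hO'sm
        exact ⟨v, indiscOver_concat_mono L M hv (subSeq_concat_left _ _) (subSeq_refl _),
          indiscOver_concat_mono L M hv (subSeq_concat_right _ _) (subSeq_refl _)⟩
      · have hinfH : Infinite ((g (i + 1)).concat (g i)).idx := infinite_lex_sum_left hi2
        have hsmH : #((g (i + 1)).concat (g i)).idx < κbar :=
          card_lex_sum_lt _mon.isRegular.aleph0_le (hgsm (i + 1) (by omega)) (hgsm i hi.le)
        obtain ⟨v, hv⟩ := append_lemma L M _mon hA hβ ((g (i + 1)).concat (g i))
          hinfH hsmH hc O' hO'sm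
        exact ⟨v, indiscOver_concat_mono L M hv (subSeq_concat_right _ _) (subSeq_refl _),
          indiscOver_concat_mono L M hv (subSeq_concat_left _ _) (subSeq_refl _)⟩
    choose Lv hLv1 hLv2 using hLex
    set Ls : ℕ → Seq M β := fun i => if h : i < k then ⟨O', Lv i h⟩ else ⟨O', Lv 0 hk⟩
      with hLs
    have hLs_eq : ∀ i (h : i < k), Ls i = ⟨O', Lv i h⟩ := by
      intro i h
      rw [hLs]
      simp only [dif_pos h]
    have hL1 : ∀ i (h : i < k), IndiscOver L M A ((g i).concat (Ls i)).val := by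
      intro i h
      rw [hLs_eq i h]
      exact hLv1 i h
    have hL2 : ∀ i (h : i < k), IndiscOver L M A ((g (i + 1)).concat (Ls i)).val := by
      intro i h
      rw [hLs_eq i h]
      exact hLv2 i h
    have hKex : ∀ i, 0 < i → i < k → ∃ v : O → β → M,
        IndiscOver L M A (((⟨O, v⟩ : Seq M β)).concat (Ls (i - 1))).val ∧
        IndiscOver L M A (((⟨O, v⟩ : Seq M β)).concat (Ls i)).val := by
      intro i h0 hik
      have hLsm1 : #(Ls (i - 1)).idx < κbar := by
        rw [hLs_eq (i - 1) (by omega)]; exact hO'sm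
      have hLsm2 : #(Ls i).idx < κbar := by
        rw [hLs_eq i hik]; exact hO'sm
      have hc1 : IndiscOver L M A ((g i).concat (Ls (i - 1))).val := by
        have h' := hL2 (i - 1) (by omega)
        have e : i - 1 + 1 = i := by omega
        rwa [e] at h'
      exact head_replace L M _mon hA hβ (g i) (Ls (i - 1)) (Ls i) (hginf i hik.le)
        hLsm1 hLsm2 hc1 (hL1 i hik) O hOsm
    choose Kv hKv1 hKv2 using hKex
    set Ks : ℕ → Seq M β := fun i => if h : 0 < i ∧ i < k then ⟨O, Kv i h.1 h.2⟩ else I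
      with hKs
    have hKs_eq : ∀ i (h1 : 0 < i) (h2 : i < k), Ks i = ⟨O, Kv i h1 h2⟩ := by
      intro i h1 h2
      rw [hKs]
      simp only [dif_pos (And.intro h1 h2)]
    refine ⟨k, fun i => if (i : ℕ) = 0 then I else if (i : ℕ) = k then J else Ks (i : ℕ),
      fun i => Ls (i : ℕ), by simp, ?_, ?_, ?_, ?_⟩
    · simp [Fin.val_last, hk.ne']
    · intro i h1 h2
      show Nonempty ((if (i : ℕ) = 0 then I else if (i : ℕ) = k then J
        else Ks (i : ℕ)).idx ≃o O)
      rw [if_neg (show ¬((i : ℕ) = 0) by omega), if_neg (show ¬((i : ℕ) = k) by omega),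
        hKs_eq (i : ℕ) h1 h2]
      exact ⟨OrderIso.refl O⟩
    · intro i
      show Nonempty ((Ls (i : ℕ)).idx ≃o O')
      rw [hLs_eq (i : ℕ) i.isLt]
      exact ⟨OrderIso.refl O'⟩
    · intro i
      constructor
      · simp only [Fin.coe_castSucc]
        show IndiscOver L M A ((if (i : ℕ) = 0 then I else if (i : ℕ) = k then J
          else Ks (i : ℕ)).concat (Ls (i : ℕ))).val
        by_cases h0 : (i : ℕ) = 0
        · rw [if_pos h0, h0]
          have h' := hL1 0 hk
          rwa [hg0] at h'
        · rw [if_neg h0, if_neg (by have := i.isLt; omega),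
            hKs_eq (i : ℕ) (Nat.pos_of_ne_zero h0) i.isLt]
          exact (hKv2 (i : ℕ) (Nat.pos_of_ne_zero h0) i.isLt)
      · simp only [Fin.val_succ]
        show IndiscOver L M A ((if (i : ℕ) + 1 = 0 then I else if (i : ℕ) + 1 = k then J
          else Ks ((i : ℕ) + 1)).concat (Ls (i : ℕ))).val
        by_cases hik : (i : ℕ) + 1 = k
        · rw [if_neg (show ¬((i : ℕ) + 1 = 0) by omega), if_pos hik]
          have h' := hL2 (i : ℕ) i.isLt
          rwa [hik, hgk] at h'
        · rw [if_neg (show ¬((i : ℕ) + 1 = 0) by omega), if_neg hik,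
            hKs_eq ((i : ℕ) + 1) (by omega) (by have := i.isLt; omega)]
          have h' := hKv1 ((i : ℕ) + 1) (by omega) (by have := i.isLt; omega)
          have e : (i : ℕ) + 1 - 1 = (i : ℕ) := by omega
          rwa [e] at h'
  · rintro ⟨n, K, Lc, hK0, hKn, hKint, hLiso, hcond⟩
    rcases Nat.eq_zero_or_pos n with hn0 | hn
    · subst hn0
      have hIJ : I = J := by
        rw [← hK0, ← hKn]
        exact congrArg K (Fin.ext rfl)
      obtain ⟨v, hv⟩ := append_lemma L M _mon hA hβ I hIinf hIsm hIind O' hO'sm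
      have s1 : SimSeq L M A I ⟨O', v⟩ := ⟨hIinf, hO', Or.inl hv⟩
      have s2 : SimSeq L M A ⟨O', v⟩ I := ⟨hO', hIinf, Or.inr hv⟩
      rw [← hIJ]
      exact Relation.TransGen.head s1 (Relation.TransGen.single s2)
    · have hKinf : ∀ i : Fin (n + 1), Infinite (K i).idx := by
        intro i
        by_cases hi0 : (i : ℕ) = 0
        · have hi : i = 0 := Fin.ext hi0
          rw [hi, hK0]; exact hIinf
        by_cases hin : (i : ℕ) = n
        · have hi : i = Fin.last n := Fin.ext hin
          rw [hi, hKn]; exact hJinf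
        · obtain ⟨e⟩ := hKint i (Nat.pos_of_ne_zero hi0)
            (lt_of_le_of_ne (Nat.lt_succ_iff.1 i.isLt) hin)
          exact Infinite.of_injective ⇑e.symm e.symm.injective
      have hLinf : ∀ i : Fin n, Infinite (Lc i).idx := fun i =>
        (hLiso i).elim fun e => Infinite.of_injective ⇑e.symm e.symm.injective
      have step : ∀ i : Fin n, ApproxSeq L M A (K i.castSucc) (K i.succ) := by
        intro i
        have s1 : SimSeq L M A (K i.castSucc) (Lc i) := ⟨hKinf _, hLinf i, Or.inl (hcond i).1⟩
        have s2 : SimSeq L M A (Lc i) (K i.succ) := ⟨hLinf i, hKinf _, Or.inr (hcond i).2⟩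
        exact Relation.TransGen.head s1 (Relation.TransGen.single s2)
      have main : ∀ m : ℕ, ∀ hm : m < n,
          ApproxSeq L M A (K 0) (K ⟨m + 1, Nat.succ_lt_succ hm⟩) := by
        intro m
        induction m with
        | zero =>
          intro hm
          have h := step ⟨0, hm⟩
          have e1 : (⟨0, hm⟩ : Fin n).castSucc = (0 : Fin (n + 1)) := Fin.ext (by simp)
          have e2 : (⟨0, hm⟩ : Fin n).succ = (⟨1, Nat.succ_lt_succ hm⟩ : Fin (n + 1)) :=
            Fin.ext (by simp)
          rwa [e1, e2] at h
        | succ m ih =>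
          intro hm
          have h1 := ih (lt_trans (Nat.lt_succ_self m) hm)
          have h2 := step ⟨m + 1, hm⟩
          have e1 : (⟨m + 1, hm⟩ : Fin n).castSucc =
              (⟨m + 1, Nat.succ_lt_succ (lt_trans (Nat.lt_succ_self m) hm)⟩ : Fin (n + 1)) :=
            Fin.ext (by simp)
          have e2 : (⟨m + 1, hm⟩ : Fin n).succ =
              (⟨m + 2, Nat.succ_lt_succ hm⟩ : Fin (n + 1)) := Fin.ext (by simp)
          rw [e1, e2] at h2
          exact Relation.TransGen.trans h1 h2
      have h := main (n - 1) (by omega)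
      have e2 : (⟨(n - 1) + 1, Nat.succ_lt_succ (by omega)⟩ : Fin (n + 1)) = Fin.last n :=
        Fin.ext (by simp; omega)
      rw [hK0, e2, hKn] at h
      exact h

end BddUltra
end

section
/- (Weak chain condition) If (b_i)_{i<ω} is a ⫝ᵇᵘ-Morley sequence over A that is moreover Ac-indiscernible, then b₀ ⫝ᵇᵘ_A c. -/
open FirstOrder Cardinal

universe u v w

namespace BddUltra

variable (L : FirstOrder.Language.{u, u}) (M : Type u) [L.Structure M]

section Helpers17

variable {L' : FirstOrder.Language.{u, u}} {M' : Type u} [L'.Structure M']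

theorem sameType_aut (σ : M' ≃[L'] M') {α : Type v} (a : α → M') :
    SameType L' M' a (⇑σ ∘ a) := fun φ =>
  (Language.StrongHomClass.realize_formula σ φ).symm

theorem IER.rel_aut {α : Type u} (E : IER L' M' α) (σ : M' ≃[L'] M') {x y : α → M'}
    (h : E.rel x y) : E.rel (⇑σ ∘ x) (⇑σ ∘ y) := by
  refine (E.invariant x y _ _ ?_).mp h
  have he : Sum.elim (⇑σ ∘ x) (⇑σ ∘ y) = ⇑σ ∘ Sum.elim x y := by
    funext i; cases i <;> rfl
  rw [he]
  exact sameType_aut σ _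

theorem BddU.map17 {κ : Cardinal.{u}} {X X' : Set (M' ≃[L'] M')} {δ : Type u}
    {H : IER L' M' δ} {d : δ → M'} (σ : M' ≃[L'] M')
    (hmap : ∀ τ ∈ X', ∃ ρ ∈ X, ∀ m : M', τ (σ m) = σ (ρ m))
    (hb : BddU L' M' κ X H d) : BddU L' M' κ X' H (⇑σ ∘ d) := by
  obtain ⟨S, hS, h1⟩ := hb
  refine ⟨(fun s => ⇑σ ∘ s) '' S, lt_of_le_of_lt Cardinal.mk_image_le hS, ?_⟩
  intro τ hτ
  obtain ⟨ρ, hρ, hc⟩ := hmap τ hτ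
  obtain ⟨s, hs, hrel⟩ := h1 ρ hρ
  refine ⟨⇑σ ∘ s, ⟨s, hs, rfl⟩, ?_⟩
  have he : ⇑τ ∘ (⇑σ ∘ d) = ⇑σ ∘ (⇑ρ ∘ d) := by funext z; exact hc (d z)
  rw [he]
  exact H.rel_aut σ hrel

theorem BddU.mono17 {κ : Cardinal.{u}} {X X' : Set (M' ≃[L'] M')} {δ : Type u}
    {H : IER L' M' δ} {d : δ → M'} (hsub : X' ⊆ X)
    (hb : BddU L' M' κ X H d) : BddU L' M' κ X' H d := by
  obtain ⟨S, hS, h1⟩ := hb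
  exact ⟨S, hS, fun τ hτ => h1 τ (hsub hτ)⟩

theorem BddU.of_rel {κ : Cardinal.{u}} {X : Set (M' ≃[L'] M')} {δ : Type u}
    {H : IER L' M' δ} {d d' : δ → M'} (hr : H.rel d d')
    (hb : BddU L' M' κ X H d') : BddU L' M' κ X H d := by
  obtain ⟨S, hS, h1⟩ := hb
  refine ⟨S, hS, fun τ hτ => ?_⟩
  obtain ⟨s, hs, hrel⟩ := h1 τ hτ
  exact ⟨s, hs, H.equiv.trans (H.rel_aut τ hr) hrel⟩

end Helpers17

/-- (Weak chain condition.) If `(b_i)_{i<ω}` is a `⫝ᵇᵘ`-Morley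
sequence over `A` that is moreover `Ac`-indiscernible, then `b₀ ⫝ᵇᵘ_A c`. -/
theorem statement_17 (L : FirstOrder.Language.{u, u}) (M : Type u) [L.Structure M]
    (κbar : Cardinal.{u}) (_mon : Monster L M κbar)
    (A : Set M) (hA : #A < κbar) {β γ : Type u} (hβ : #β < κbar) (hγ : #γ < κbar)
    (bi : ℕ → β → M) (c : γ → M)
    (hIndA : IndiscOver L M A bi)
    (hMor : ∀ i : ℕ, IndepBUReal L M κbar A (bi i) (fun p : Fin i × β => bi p.1 p.2))
    (hIndAc : IndiscOver L M (A ∪ Set.range c) bi) :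
    IndepBUReal L M κbar A (bi 0) c := by
  classical
  obtain ⟨hℵ, hreg, hsl, hlang, hsat, hhom⟩ := _mon
  -- parameters A together with c, as a tuple
  set a₀ : (↥A ⊕ γ) → M := Sum.elim (Subtype.val : ↥A → M) c with ha₀
  have hcardα : #(↥A ⊕ γ) < κbar := by
    rw [Cardinal.mk_sum, Cardinal.lift_id, Cardinal.lift_id]
    exact Cardinal.add_lt_of_lt hℵ.le hA hγ
  -- reindexing of parameters into A ∪ range c
  let j : (↥A ⊕ γ) → ↥(A ∪ Set.range c) :=
    Sum.elim (fun x => ⟨x.1, Or.inl x.2⟩) (fun y => ⟨c y, Or.inr ⟨y, rfl⟩⟩)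
  have hcomp : ∀ {ζ : Type u} (w : ζ → M),
      (Sum.elim (Subtype.val : ↥(A ∪ Set.range c) → M) w) ∘ Sum.map j id
        = Sum.elim a₀ w := by
    intro ζ w
    funext q
    rcases q with (x | y) | q <;> rfl
  -- EM-transfer over A ∪ c for the original sequence, with parameters a₀
  have hEM : ∀ (n : ℕ) (s t : Fin n → ℕ), StrictMono s → StrictMono t →
      ∀ φ : L.Formula ((↥A ⊕ γ) ⊕ (Fin n × β)),
        φ.Realize (Sum.elim a₀ (flatten M bi s)) ↔
          φ.Realize (Sum.elim a₀ (flatten M bi t)) := by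
    intro n s t hs ht φ
    have h := hIndAc n s t hs ht (φ.relabel (Sum.map j id))
    rwa [Language.Formula.realize_relabel, Language.Formula.realize_relabel,
      hcomp, hcomp] at h
  have hval : ∀ n : ℕ, StrictMono (fun k : Fin n => (k : ℕ)) := by
    intro n a b h; exact h
  have hfincard : ∀ n : ℕ, #((↥A ⊕ γ) ⊕ (Fin n × β)) < κbar := by
    intro n
    have h1 : #(Fin n × β) < κbar := by
      simp only [Cardinal.mk_prod, Cardinal.mk_fin, Cardinal.lift_natCast,
        Cardinal.lift_id']
      exact Cardinal.mul_lt_of_lt hℵ.le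
        (lt_of_lt_of_le (Cardinal.nat_lt_aleph0 n) hℵ.le) hβ
    rw [Cardinal.mk_sum, Cardinal.lift_id, Cardinal.lift_id]
    exact Cardinal.add_lt_of_lt hℵ.le hcardα h1
  intro δ H d
  constructor
  · rintro ⟨hd0, hdc⟩
    -- the bound witnessing that d is bounded over Ac
    obtain ⟨S, hS, hSd⟩ := hdc
    set lam : Cardinal.{u} := Order.succ #S with hlam_def
    have hlam : lam < κbar :=
      lt_of_le_of_lt (Order.succ_le_of_lt (Cardinal.cantor _)) (hsl _ hS)
    set It : Type u := lam.ord.ToType with hIt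
    have hItcard : #It = lam := Cardinal.mk_ord_toType lam
    have hcardB : #(It × β) < κbar := by
      rw [Cardinal.mk_prod, Cardinal.lift_id, Cardinal.lift_id, hItcard]
      exact Cardinal.mul_lt_of_lt hℵ.le hlam hβ
    -- the partial type describing a sequence indexed by It with the same EM type
    -- over A ∪ c as (b_i)
    set p : Set (L.Formula ((↥A ⊕ γ) ⊕ (It × β))) :=
      {ψ | ∃ (n : ℕ) (s : Fin n → It), StrictMono s ∧
        ∃ φ : L.Formula ((↥A ⊕ γ) ⊕ (Fin n × β)),
          ψ = φ.relabel (Sum.map id (fun q : Fin n × β => (s q.1, q.2))) ∧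
          φ.Realize (Sum.elim a₀ (flatten M bi (fun k : Fin n => (k : ℕ))))} with hp
    have hfin : ∀ fs : Finset (L.Formula ((↥A ⊕ γ) ⊕ (It × β))), ↑fs ⊆ p →
        ∃ b : It × β → M, ∀ ψ ∈ fs, ψ.Realize (Sum.elim a₀ b) := by
      intro fs hfs
      have hget : ∀ ψ : fs, ∃ (n : ℕ) (s : Fin n → It), StrictMono s ∧
          ∃ φ : L.Formula ((↥A ⊕ γ) ⊕ (Fin n × β)),
            ψ.1 = φ.relabel (Sum.map id (fun q : Fin n × β => (s q.1, q.2))) ∧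
            φ.Realize (Sum.elim a₀ (flatten M bi (fun k : Fin n => (k : ℕ)))) :=
        fun ψ => hfs ψ.2
      choose nf sf hsmono φf hψf hφf using hget
      -- the finite set of indices used
      set F : Finset It := fs.attach.biUnion
        (fun ψ => Finset.univ.image (sf ψ)) with hF
      set g : It → ℕ := fun x =>
        if h : x ∈ F then ((F.orderIsoOfFin rfl).symm ⟨x, h⟩ : Fin F.card) else 0
        with hg
      have hgmono : ∀ x ∈ F, ∀ y ∈ F, x < y → g x < g y := by
        intro x hx y hy hxy
        simp only [hg, dif_pos hx, dif_pos hy]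
        have : (F.orderIsoOfFin rfl).symm ⟨x, hx⟩ < (F.orderIsoOfFin rfl).symm ⟨y, hy⟩ :=
          (OrderIso.lt_iff_lt _).mpr (by exact hxy)
        exact this
      refine ⟨fun q => bi (g q.1) q.2, ?_⟩
      intro ψ0 hψ0
      have hmem : ∀ (ψ : fs) (k : Fin (nf ψ)), sf ψ k ∈ F := by
        intro ψ k
        refine Finset.mem_biUnion.mpr ⟨ψ, Finset.mem_attach _ _, ?_⟩
        exact Finset.mem_image_of_mem _ (Finset.mem_univ k)
      set ψ : fs := ⟨ψ0, hψ0⟩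
      rw [show ψ0 = ψ.1 from rfl, hψf ψ, Language.Formula.realize_relabel]
      have he : (Sum.elim a₀ (fun q : It × β => bi (g q.1) q.2)) ∘
          Sum.map id (fun q : Fin (nf ψ) × β => (sf ψ q.1, q.2))
            = Sum.elim a₀ (flatten M bi (fun k => g (sf ψ k))) := by
        funext q; rcases q with q | q <;> rfl
      rw [he]
      have hmono2 : StrictMono (fun k : Fin (nf ψ) => g (sf ψ k)) := by
        intro a b hab
        exact hgmono _ (hmem ψ a) _ (hmem ψ b) (hsmono ψ hab)
      exact (hEM (nf ψ) _ _ (hval _) hmono2 (φf ψ)).mp (hφf ψ)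
    obtain ⟨b', hb'⟩ := hsat _ _ hcardα hcardB a₀ p hfin
    set bb : It → β → M := fun i x => b' (i, x) with hbb
    -- key property: increasing tuples from bb have the same type over A∪c as from bi
    have hkey : ∀ (n : ℕ) (s : Fin n → It), StrictMono s →
        ∀ φ : L.Formula ((↥A ⊕ γ) ⊕ (Fin n × β)),
          φ.Realize (Sum.elim a₀ (flatten M bi (fun k : Fin n => (k : ℕ)))) ↔
            φ.Realize (Sum.elim a₀ (flatten M bb s)) := by
      have haux : ∀ (n : ℕ) (s : Fin n → It), StrictMono s →
          ∀ φ : L.Formula ((↥A ⊕ γ) ⊕ (Fin n × β)),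
            φ.Realize (Sum.elim a₀ (flatten M bi (fun k : Fin n => (k : ℕ)))) →
              φ.Realize (Sum.elim a₀ (flatten M bb s)) := by
        intro n s hs φ hφ
        have h := hb' _ ⟨n, s, hs, φ, rfl, hφ⟩
        rw [Language.Formula.realize_relabel] at h
        have he : (Sum.elim a₀ b') ∘
            Sum.map id (fun q : Fin n × β => (s q.1, q.2))
              = Sum.elim a₀ (flatten M bb s) := by
          funext q; rcases q with q | q <;> rfl
        rwa [he] at h
      intro n s hs φ
      refine ⟨haux n s hs φ, ?_⟩
      intro h
      by_contra hn
      have := haux n s hs φ.not (Language.Formula.realize_not.mpr hn)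
      rw [Language.Formula.realize_not] at this
      exact this h
    -- automorphisms over A∪c carrying b₀ to bb i
    have hσex : ∀ i : It, ∃ σ : M ≃[L] M, (∀ x ∈ A, σ x = x) ∧
        (∀ y : γ, σ (c y) = c y) ∧ (∀ x : β, σ (bi 0 x) = bb i x) := by
      intro i
      have hs1 : StrictMono (fun _ : Fin 1 => i) := by
        intro a b h
        rw [Subsingleton.elim a b] at h
        exact absurd h (lt_irrefl b)
      have hst : SameType L M (Sum.elim a₀ (flatten M bi (fun k : Fin 1 => (k : ℕ))))
          (Sum.elim a₀ (flatten M bb (fun _ : Fin 1 => i))) :=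
        fun φ => hkey 1 _ hs1 φ
      have hcard : #((↥A ⊕ γ) ⊕ (Fin 1 × β)) < κbar := hfincard 1
      obtain ⟨σ, hσ⟩ := hhom _ _ _ hcard hst
      refine ⟨σ, fun x hx => hσ (Sum.inl (Sum.inl ⟨x, hx⟩)),
        fun y => hσ (Sum.inl (Sum.inr y)), fun x => hσ (Sum.inr (0, x))⟩
    choose σf hσA hσc hσb using hσex
    -- pigeonhole
    have hfmem : ∀ i : It, ∃ s ∈ S, H.rel (⇑(σf i) ∘ d) s := by
      intro i
      exact hSd (σf i) ⟨hσA i, fun y => hσc i y⟩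
    choose sf hsfS hsfrel using hfmem
    have hninj : ¬ Function.Injective (fun i : It => (⟨sf i, hsfS i⟩ : ↥S)) := by
      intro hinj
      have hle := Cardinal.mk_le_of_injective hinj
      rw [hItcard] at hle
      exact absurd (lt_of_le_of_lt hle (Order.lt_succ #S)) (lt_irrefl _)
    obtain ⟨i, j', hij, hne⟩ := Function.not_injective_iff.mp hninj
    have hsf_eq : sf i = sf j' := congrArg Subtype.val hij
    have hrelij : H.rel (⇑(σf i) ∘ d) (⇑(σf j') ∘ d) := by
      refine H.equiv.trans (hsfrel i) ?_
      rw [hsf_eq]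
      exact H.equiv.symm (hsfrel j')
    -- the key step, for two indices in increasing order
    have key : ∀ i j : It, i < j → H.rel (⇑(σf i) ∘ d) (⇑(σf j) ∘ d) →
        BddU L M κbar (autSet L M A) H d := by
      clear hrelij hsf_eq hne hij hninj hsfrel hsfS
      intro i j hij hrel
      -- an automorphism over A carrying (b₀, b₁) to (bb i, bb j)
      have hs2 : StrictMono (fun k : Fin 2 => if k = 0 then i else j) := by
        intro a b hab
        have ha : a = 0 := by omega
        have hb2 : b = 1 := by omega
        subst ha; subst hb2
        simpa using hij
      have hst : SameType L M (Sum.elim a₀ (flatten M bi (fun k : Fin 2 => (k : ℕ))))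
          (Sum.elim a₀ (flatten M bb (fun k : Fin 2 => if k = 0 then i else j))) :=
        fun φ => hkey 2 _ hs2 φ
      have hcard : #((↥A ⊕ γ) ⊕ (Fin 2 × β)) < κbar := hfincard 2
      obtain ⟨τ, hτ⟩ := hhom _ _ _ hcard hst
      have hτA : ∀ x ∈ A, τ x = x := fun x hx => hτ (Sum.inl (Sum.inl ⟨x, hx⟩))
      have hτ0 : ∀ x : β, τ (bi 0 x) = bb i x := by
        intro x
        have := hτ (Sum.inr (0, x))
        simpa [flatten] using this
      have hτ1 : ∀ x : β, τ (bi 1 x) = bb j x := by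
        intro x
        have := hτ (Sum.inr (1, x))
        simpa [flatten] using this
      -- σf j ∘ d is bounded over A (bb j)
      have h1 : BddU L M κbar (autSetTup L M A (bb j)) H (⇑(σf j) ∘ d) := by
        refine hd0.map17 (σf j) ?_
        rintro ρ' ⟨hρA, hρb⟩
        refine ⟨((σf j).symm.comp ρ').comp (σf j), ⟨?_, ?_⟩, ?_⟩
        · intro x hx
          rw [Language.Equiv.comp_apply, Language.Equiv.comp_apply, hσA j x hx,
            hρA x hx]
          conv_lhs => rw [← hσA j x hx]
          exact (σf j).symm_apply_apply x
        · intro x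
          rw [Language.Equiv.comp_apply, Language.Equiv.comp_apply, hσb j x,
            hρb x]
          conv_lhs => rw [← hσb j x]
          exact (σf j).symm_apply_apply _
        · intro m
          rw [Language.Equiv.comp_apply, Language.Equiv.comp_apply]
          exact ((σf j).apply_symm_apply _).symm
      -- σf j ∘ d is bounded over A (bb i)
      have h2 : BddU L M κbar (autSetTup L M A (bb i)) H (⇑(σf j) ∘ d) := by
        refine BddU.of_rel (H.equiv.symm hrel) ?_
        refine hd0.map17 (σf i) ?_
        rintro ρ' ⟨hρA, hρb⟩
        refine ⟨((σf i).symm.comp ρ').comp (σf i), ⟨?_, ?_⟩, ?_⟩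
        · intro x hx
          rw [Language.Equiv.comp_apply, Language.Equiv.comp_apply, hσA i x hx,
            hρA x hx]
          conv_lhs => rw [← hσA i x hx]
          exact (σf i).symm_apply_apply x
        · intro x
          rw [Language.Equiv.comp_apply, Language.Equiv.comp_apply, hσb i x,
            hρb x]
          conv_lhs => rw [← hσb i x]
          exact (σf i).symm_apply_apply _
        · intro m
          rw [Language.Equiv.comp_apply, Language.Equiv.comp_apply]
          exact ((σf i).apply_symm_apply _).symm
      -- pull back by τ : bounded over A b₁ and over A b₀
      have h3 : BddU L M κbar (autSetTup L M A (bi 1)) H (⇑τ.symm ∘ (⇑(σf j) ∘ d)) := by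
        refine h1.map17 τ.symm ?_
        rintro ρ' ⟨hρA, hρb⟩
        refine ⟨(τ.comp ρ').comp τ.symm, ⟨?_, ?_⟩, ?_⟩
        · intro x hx
          rw [Language.Equiv.comp_apply, Language.Equiv.comp_apply]
          have hsx : τ.symm x = x := by
            conv_lhs => rw [← hτA x hx]
            exact τ.symm_apply_apply x
          rw [hsx, hρA x hx, hτA x hx]
        · intro x
          rw [Language.Equiv.comp_apply, Language.Equiv.comp_apply]
          have hsx : τ.symm (bb j x) = bi 1 x := by
            conv_lhs => rw [← hτ1 x]
            exact τ.symm_apply_apply _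
          rw [hsx, hρb x, hτ1 x]
        · intro m
          rw [Language.Equiv.comp_apply, Language.Equiv.comp_apply]
          exact (τ.symm_apply_apply _).symm
      have h4 : BddU L M κbar (autSetTup L M A (bi 0)) H (⇑τ.symm ∘ (⇑(σf j) ∘ d)) := by
        refine h2.map17 τ.symm ?_
        rintro ρ' ⟨hρA, hρb⟩
        refine ⟨(τ.comp ρ').comp τ.symm, ⟨?_, ?_⟩, ?_⟩
        · intro x hx
          rw [Language.Equiv.comp_apply, Language.Equiv.comp_apply]
          have hsx : τ.symm x = x := by
            conv_lhs => rw [← hτA x hx]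
            exact τ.symm_apply_apply x
          rw [hsx, hρA x hx, hτA x hx]
        · intro x
          rw [Language.Equiv.comp_apply, Language.Equiv.comp_apply]
          have hsx : τ.symm (bb i x) = bi 0 x := by
            conv_lhs => rw [← hτ0 x]
            exact τ.symm_apply_apply _
          rw [hsx, hρb x, hτ0 x]
        · intro m
          rw [Language.Equiv.comp_apply, Language.Equiv.comp_apply]
          exact (τ.symm_apply_apply _).symm
      -- apply the Morley hypothesis at index 1
      have h4' : BddU L M κbar
          (autSetTup L M A (fun q : Fin 1 × β => bi (q.1 : ℕ) q.2)) H
          (⇑τ.symm ∘ (⇑(σf j) ∘ d)) := by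
        refine h4.mono17 ?_
        rintro ρ ⟨hρA, hρb⟩
        refine ⟨hρA, ?_⟩
        intro x
        have h := hρb (0, x)
        simpa using h
      have h5 : BddU L M κbar (autSet L M A) H (⇑τ.symm ∘ (⇑(σf j) ∘ d)) :=
        (hMor 1 δ H (⇑τ.symm ∘ (⇑(σf j) ∘ d))).mp ⟨h3, h4'⟩
      -- unconjugate by τ
      have h6 : BddU L M κbar (autSet L M A) H (⇑(σf j) ∘ d) := by
        have he : ⇑(σf j) ∘ d = ⇑τ ∘ (⇑τ.symm ∘ (⇑(σf j) ∘ d)) := by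
          funext z; exact (τ.apply_symm_apply _).symm
        rw [he]
        refine h5.map17 (X' := autSet L M A) τ ?_
        · intro ρ' hρ'
          refine ⟨(τ.symm.comp ρ').comp τ, ?_, ?_⟩
          · intro x hx
            rw [Language.Equiv.comp_apply, Language.Equiv.comp_apply, hτA x hx,
              hρ' x hx]
            conv_lhs => rw [← hτA x hx]
            exact τ.symm_apply_apply x
          · intro m
            rw [Language.Equiv.comp_apply, Language.Equiv.comp_apply]
            exact (τ.apply_symm_apply _).symm
      -- unconjugate by σf j
      have he2 : d = ⇑(σf j).symm ∘ (⇑(σf j) ∘ d) := by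
        funext z; exact ((σf j).symm_apply_apply _).symm
      rw [he2]
      refine h6.map17 (X' := autSet L M A) (σf j).symm ?_
      · intro ρ' hρ'
        refine ⟨((σf j).comp ρ').comp (σf j).symm, ?_, ?_⟩
        · intro x hx
          rw [Language.Equiv.comp_apply, Language.Equiv.comp_apply]
          have hsx : (σf j).symm x = x := by
            conv_lhs => rw [← hσA j x hx]
            exact (σf j).symm_apply_apply x
          rw [hsx, hρ' x hx, hσA j x hx]
        · intro m
          rw [Language.Equiv.comp_apply, Language.Equiv.comp_apply]
          exact ((σf j).symm_apply_apply _).symm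
    rcases hne.lt_or_gt with h | h
    · exact key i j' h hrelij
    · exact key j' i h (H.equiv.symm hrelij)
  · intro hdA
    constructor <;> exact hdA.mono17 (fun σ hσ => hσ.1)

end BddUltra
end
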